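/- Let q⁽¹⁾ and q⁽²⁾ be conservative Q-matrices on ℕ satisfying condition (1.2). Suppose there exists a function φ : ℕ → ℝ with φ_i ≥ 0 for all i, φ nondecreasing with φ_i → ∞ as i → ∞, and a constant c ≥ 0 such that for every i the family (q⁽²⁾ i j · (φ_j − φ_i))_j is summable and ∑_j q⁽²⁾ i j (φ_j − φ_i) ≤ c(1 + φ_i). Then both q⁽¹⁾ and q⁽²⁾ are regular. -/

import Mathlib

open scoped BigOperators
open Filter Topology

/-- Row `i` of `q` with the diagonal entry replaced by `0`
(used to form sums over the off-diagonal entries). -/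
noncomputable def offDiag (q : ℕ → ℕ → ℝ) (i j : ℕ) : ℝ :=
  if j = i then 0 else q i j

/-- `q` is a (totally stable) Q-matrix on `ℕ`: nonnegative off-diagonal entries,
nonpositive diagonal, and each row is summable off the diagonal with
`∑_{j ≠ i} q i j ≤ qᵢ := -q i i`. -/
def IsQMatrix (q : ℕ → ℕ → ℝ) : Prop :=
  (∀ i j, i ≠ j → 0 ≤ q i j) ∧
  (∀ i, q i i ≤ 0) ∧
  (∀ i, Summable (fun j => offDiag q i j)) ∧
  (∀ i, (∑' j, offDiag q i j) ≤ - q i i)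

/-- A Q-matrix is conservative if each row sums to `0`:
`∑_{j ≠ i} q i j = qᵢ = -q i i`. -/
def IsConservative (q : ℕ → ℕ → ℝ) : Prop :=
  ∀ i, (∑' j, offDiag q i j) = - q i i

/-- A Q-matrix is bounded if `sup_i qᵢ < ∞`. -/
def IsBoundedQ (q : ℕ → ℕ → ℝ) : Prop :=
  ∃ C : ℝ, ∀ i, - q i i ≤ C

/-- A substochastic transition function on `[0,∞)` (parametrized by `t : ℝ`,
with all conditions imposed for `t ≥ 0`). -/
def IsTransitionFunction (P : ℝ → ℕ → ℕ → ℝ) : Prop :=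
  (∀ t i j, 0 ≤ t → 0 ≤ P t i j) ∧
  (∀ t i, 0 ≤ t → Summable (fun j => P t i j)) ∧
  (∀ t i, 0 ≤ t → (∑' j, P t i j) ≤ 1) ∧
  (∀ i j, P 0 i j = if i = j then 1 else 0) ∧
  (∀ t s i j, 0 ≤ t → 0 ≤ s → P (t + s) i j = ∑' k, P t i k * P s k j)

/-- `P` satisfies the backward integral equation for the Q-matrix `q`:
`P t i j = δ_{ij} e^{-qᵢ t} + ∫_0^t e^{-qᵢ (t-s)} ∑_{k ≠ i} q i k P s k j ds`
(here `-qᵢ = q i i`). -/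
def BackwardEq (q : ℕ → ℕ → ℝ) (P : ℝ → ℕ → ℕ → ℝ) : Prop :=
  ∀ t i j, 0 ≤ t →
    P t i j = (if i = j then 1 else 0) * Real.exp (q i i * t) +
      ∫ s in (0:ℝ)..t,
        Real.exp (q i i * (t - s)) * (∑' k, if k = i then 0 else q i k * P s k j)

/-- `P` is the minimal Q-process for `q`: a substochastic transition function
satisfying the backward integral equation for `q`, which is pointwise below any
other such transition function. -/
def IsMinimalQProcess (q : ℕ → ℕ → ℝ) (P : ℝ → ℕ → ℕ → ℝ) : Prop :=
  IsTransitionFunction P ∧ BackwardEq q P ∧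
  ∀ P', IsTransitionFunction P' → BackwardEq q P' →
    ∀ t i j, 0 ≤ t → P t i j ≤ P' t i j

/-- `q` is regular (`IsRegularQ` to avoid a name clash with Mathlib): conservative, and the minimal Q-process is honest (stochastic). -/
def IsRegularQ (q : ℕ → ℕ → ℝ) : Prop :=
  IsConservative q ∧
  ∀ P, IsMinimalQProcess q P → ∀ t, 0 ≤ t → ∀ i, (∑' j, P t i j) = 1

/-- The tail sum `∑_{j ≥ k} f j`. -/
noncomputable def tailSum (f : ℕ → ℝ) (k : ℕ) : ℝ :=
  ∑' j, if k ≤ j then f j else 0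

/-- Condition (1.1): stochastic comparability of `P1` and `P2`. -/
def Cond11 (P1 P2 : ℝ → ℕ → ℕ → ℝ) : Prop :=
  ∀ t, 0 ≤ t → ∀ k i m, i ≤ m → tailSum (P1 t i) k ≤ tailSum (P2 t m) k

/-- Condition (1.2) for the Q-matrices `q1`, `q2`. -/
def Cond12 (q1 q2 : ℕ → ℕ → ℝ) : Prop :=
  ∀ i m, i ≤ m → ∀ k, (k ≤ i ∨ m + 1 ≤ k) →
    tailSum (q1 i) k ≤ tailSum (q2 m) k

/-- Condition (1.3) for the Q-matrices `q1`, `q2` (the conservative reduction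
of (1.2)). -/
def Cond13 (q1 q2 : ℕ → ℕ → ℝ) : Prop :=
  ∀ i m, i ≤ m →
    (∀ k, m + 1 ≤ k → tailSum (q1 i) k ≤ tailSum (q2 m) k) ∧
    (∀ k, k + 1 ≤ i →
      (∑ j ∈ Finset.range (k + 1), q2 m j) ≤ ∑ j ∈ Finset.range (k + 1), q1 i j)

namespace S15

open MeasureTheory Set

lemma tsum_swap {f : ℕ → ℕ → ℝ} (hf : ∀ k j, 0 ≤ f k j)
    (hk : ∀ k, Summable (f k)) (hs : Summable fun k => ∑' j, f k j) :
    ∑' j, ∑' k, f k j = ∑' k, ∑' j, f k j := by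
  have hjoint : Summable (fun p : ℕ × ℕ => f p.1 p.2) := by
    refine (summable_prod_of_nonneg ?_).2 ⟨hk, hs⟩
    intro p; exact hf p.1 p.2
  refine Summable.tsum_comm' hjoint hk fun j => ?_
  exact hjoint.comp_injective (fun k₁ k₂ h => by simpa using congrArg Prod.fst h : Function.Injective fun k => ((k, j) : ℕ × ℕ))

lemma summable_tail {f : ℕ → ℝ} (hf : Summable f) (k : ℕ) :
    Summable (fun j => if k ≤ j then f j else 0) := by
  have := hf.indicator {j | k ≤ j}
  refine this.congr fun j => ?_
  simp [Set.indicator_apply, Set.mem_setOf_eq]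

lemma tailSum_succ {f : ℕ → ℝ} (hf : Summable f) (k : ℕ) :
    tailSum f k = f k + tailSum f (k + 1) := by
  unfold tailSum
  rw [Summable.tsum_eq_add_tsum_ite (summable_tail hf k) k]
  simp only [le_refl, if_true]
  congr 1
  refine tsum_congr fun j => ?_
  rcases lt_trichotomy j k with h | h | h
  · rw [if_neg (by omega : ¬ j = k), if_neg (by omega : ¬ k ≤ j), if_neg (by omega : ¬ k + 1 ≤ j)]
  · rw [if_pos (by omega : j = k), if_neg (by omega : ¬ k + 1 ≤ j)]
  · rw [if_neg (by omega : ¬ j = k), if_pos (by omega : k ≤ j), if_pos (by omega : k + 1 ≤ j)]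

lemma sum_range_add_tailSum {f : ℕ → ℝ} (hf : Summable f) (k : ℕ) :
    ∑ j ∈ Finset.range k, f j + tailSum f k = ∑' j, f j := by
  induction k with
  | zero => simp [tailSum]
  | succ n ih =>
      rw [Finset.sum_range_succ, ← ih, tailSum_succ hf n]; ring

lemma tailSum_tendsto_zero {f : ℕ → ℝ} (hf : Summable f) :
    Tendsto (tailSum f) atTop (𝓝 0) := by
  have h1 : ∀ k, tailSum f k = (∑' j, f j) - ∑ j ∈ Finset.range k, f j := by
    intro k; have := sum_range_add_tailSum hf k; linarith
  have heq : tailSum f = fun k => (∑' j, f j) - ∑ j ∈ Finset.range k, f j := funext h1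
  rw [heq]
  have := hf.hasSum.tendsto_sum_nat
  have h2 : Tendsto (fun k => (∑' j, f j) - ∑ j ∈ Finset.range k, f j) atTop (𝓝 ((∑' j, f j) - ∑' j, f j)) :=
    tendsto_const_nhds.sub this
  simpa using h2

lemma tailSum_nonneg {f : ℕ → ℝ} (h : ∀ j, k ≤ j → 0 ≤ f j) :
    0 ≤ tailSum f k := tsum_nonneg fun j => by by_cases hj : k ≤ j <;> simp [hj, h j, *]

lemma abel (f : ℕ → ℝ) (hf : Summable f) (φ : ℕ → ℝ) (N : ℕ) :
    ∑ k ∈ Finset.range N, f k * (φ k - φ 0)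
      = (∑ m ∈ Finset.range N, (φ (m+1) - φ m) * tailSum f (m+1)) - (φ N - φ 0) * tailSum f N := by
  induction N with
  | zero => simp
  | succ n ih =>
      rw [Finset.sum_range_succ, Finset.sum_range_succ, ih, tailSum_succ hf n]
      ring

lemma tailSum_mul_le {i N : ℕ} (hiN : i < N) {f : ℕ → ℝ} (hf : Summable f)
    (hfnn : ∀ k, k ≠ i → 0 ≤ f k) (φ : ℕ → ℝ) (hfφ : Summable (fun k => f k * φ k))
    (hφ0 : ∀ k, 0 ≤ φ k) (hφm : Monotone φ) :
    φ N * tailSum f N ≤ tailSum (fun k => f k * φ k) N := by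
  unfold tailSum
  rw [← tsum_mul_left]
  refine Summable.tsum_le_tsum (fun k => ?_) ((summable_tail hf N).mul_left _) (summable_tail hfφ N)
  by_cases hk : N ≤ k
  · simp only [hk, if_true]
    calc φ N * f k ≤ φ k * f k := mul_le_mul_of_nonneg_right (hφm hk) (hfnn k (by omega))
      _ = f k * φ k := mul_comm _ _
  · simp [hk]

/-- Comparison lemma (Abel summation): if tail sums of `a` are below those of `b`,
`a`,`b` are nonneg off `i`, and `b·φ` is summable, then `a·φ` is summable and
the `(φ k - φ 0)`-weighted sums compare. -/

lemma comparison (a b : ℕ → ℝ) (i : ℕ) (φ : ℕ → ℝ)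
    (hφ0 : ∀ k, 0 ≤ φ k) (hφm : Monotone φ)
    (ha : ∀ k, k ≠ i → 0 ≤ a k) (hb : ∀ k, k ≠ i → 0 ≤ b k)
    (hsa : Summable a) (hsb : Summable b) (hbφ : Summable (fun k => b k * φ k))
    (htail : ∀ k, tailSum a k ≤ tailSum b k) :
    Summable (fun k => a k * φ k) ∧
      (∑' k, a k * (φ k - φ 0)) ≤ ∑' k, b k * (φ k - φ 0) := by
  set δ : ℕ → ℝ := fun m => φ (m+1) - φ m with hδ
  have hδnn : ∀ m, 0 ≤ δ m := fun m => by simp [hδ, sub_nonneg, hφm (Nat.le_succ m)]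
  have hTnn : ∀ N, i < N → 0 ≤ tailSum a N := fun N hN =>
    tailSum_nonneg (fun j hj => ha j (by omega))
  have hSnn : ∀ N, i < N → 0 ≤ tailSum b N := fun N hN =>
    tailSum_nonneg (fun j hj => hb j (by omega))
  have hφsub : ∀ N, 0 ≤ φ N - φ 0 := fun N => sub_nonneg.2 (hφm (Nat.zero_le N))
  -- the nonnegative corrected sequences
  set g : ℕ → ℝ := fun k => a k * (φ k - φ 0) + (if k = i then -(a i * (φ i - φ 0)) else 0) with hg
  have hgnn : ∀ k, 0 ≤ g k := by
    intro k; by_cases hk : k = i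
    · subst hk; simp [hg]
    · simpa [hg, hk] using mul_nonneg (ha k hk) (hφsub k)
  set gb : ℕ → ℝ := fun k => b k * (φ k - φ 0) + (if k = i then -(b i * (φ i - φ 0)) else 0) with hgb
  have hgbnn : ∀ k, 0 ≤ gb k := by
    intro k; by_cases hk : k = i
    · subst hk; simp [hgb]
    · simpa [hgb, hk] using mul_nonneg (hb k hk) (hφsub k)
  have hbφ0 : Summable (fun k => b k * (φ k - φ 0)) :=
    (hbφ.sub (hsb.mul_left (φ 0))).congr (fun k => by ring)
  have hgbsum : Summable gb := by
    refine hbφ0.add ?_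
    exact summable_of_ne_finset_zero (s := {i}) (fun k hk => by
      simp at hk; simp [if_neg hk])
  set g2 : ℕ → ℝ := fun k => if i + 1 ≤ k then b k * φ k else 0 with hg2
  have hg2nn : ∀ k, 0 ≤ g2 k := by
    intro k; by_cases hk : i + 1 ≤ k
    · simpa [hg2, hk, show i < k by omega] using mul_nonneg (hb k (by omega)) (hφ0 k)
    · simp [hg2, hk, show ¬ i < k by omega]
  have hg2sum : Summable g2 := summable_tail hbφ (i+1)
  -- bound on partial sums of b k * (φ k - φ 0)
  have hBb : ∀ N, ∑ k ∈ Finset.range N, b k * (φ k - φ 0) ≤ ∑' k, gb k + |b i * (φ i - φ 0)| := by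
    intro N
    have h1 : ∑ k ∈ Finset.range N, b k * (φ k - φ 0)
        = ∑ k ∈ Finset.range N, gb k - ∑ k ∈ Finset.range N, (if k = i then -(b i * (φ i - φ 0)) else 0) := by
      rw [← Finset.sum_sub_distrib]; exact Finset.sum_congr rfl fun k _ => by simp [hgb]
    rw [h1]
    have h2 : ∑ k ∈ Finset.range N, gb k ≤ ∑' k, gb k := Summable.sum_le_tsum _ (fun k _ => hgbnn k) hgbsum
    have h3 : -∑ k ∈ Finset.range N, (if k = i then -(b i * (φ i - φ 0)) else 0) ≤ |b i * (φ i - φ 0)| := by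
      rw [Finset.sum_ite_eq' (Finset.range N) i (fun _ => -(b i * (φ i - φ 0)))]
      by_cases hi : i ∈ Finset.range N
      · simp only [if_pos hi, neg_neg]; exact le_abs_self _
      · simp only [if_neg hi, neg_zero]; exact abs_nonneg _
    linarith
  -- bound: (φ N - φ 0) * S N ≤ ∑' g2  for N > i
  have hSbound : ∀ N, i < N → (φ N - φ 0) * tailSum b N ≤ ∑' k, g2 k := by
    intro N hN
    have h1 : (φ N - φ 0) * tailSum b N ≤ φ N * tailSum b N :=
      mul_le_mul_of_nonneg_right (by linarith [hφ0 0]) (hSnn N hN)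
    have h2 : φ N * tailSum b N ≤ tailSum (fun k => b k * φ k) N :=
      tailSum_mul_le hN hsb hb φ hbφ hφ0 hφm
    have h3 : tailSum (fun k => b k * φ k) N ≤ ∑' k, g2 k := by
      unfold tailSum
      refine Summable.tsum_le_tsum (fun k => ?_) (summable_tail hbφ N) hg2sum
      by_cases hk : N ≤ k
      · simp [hg2, hk, (by omega : i + 1 ≤ k), (by omega : i < k)]
      · simp [hg2, hk]; by_cases hk2 : i + 1 ≤ k
        · simpa [hk2, show i < k by omega] using mul_nonneg (hb k (by omega)) (hφ0 k)
        · simp [hk2, show ¬ i < k by omega]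
    linarith
  -- key chain for N > i
  have hchain : ∀ N, i < N →
      ∑ k ∈ Finset.range N, a k * (φ k - φ 0)
        ≤ ∑ k ∈ Finset.range N, b k * (φ k - φ 0) + (φ N - φ 0) * tailSum b N
            - (φ N - φ 0) * tailSum a N := by
    intro N hN
    have hA := abel a hsa φ N
    have hB := abel b hsb φ N
    have hstep : ∑ m ∈ Finset.range N, δ m * tailSum a (m+1)
        ≤ ∑ m ∈ Finset.range N, δ m * tailSum b (m+1) :=
      Finset.sum_le_sum fun m _ => mul_le_mul_of_nonneg_left (htail (m+1)) (hδnn m)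
    simp only [hδ] at hstep
    linarith
  -- summability of a·φ
  have hsumg : Summable g := by
    have hbound : ∀ N, ∑ k ∈ Finset.range N, g k
        ≤ ∑' k, gb k + |b i * (φ i - φ 0)| + ∑' k, g2 k + |a i * (φ i - φ 0)| := by
      intro N
      -- monotonicity: bound by partial sum at max N (i+1)
      set N' := max N (i+1) with hN'
      have hmono : ∑ k ∈ Finset.range N, g k ≤ ∑ k ∈ Finset.range N', g k := by
        refine Finset.sum_le_sum_of_subset_of_nonneg ?_ (fun k _ _ => hgnn k)
        exact Finset.range_subset_range.2 (le_max_left _ _)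
      have hiN' : i < N' := lt_of_lt_of_le (Nat.lt_succ_self i) (le_max_right _ _)
      have h1 : ∑ k ∈ Finset.range N', g k
          = ∑ k ∈ Finset.range N', a k * (φ k - φ 0) - a i * (φ i - φ 0) := by
        rw [hg]
        rw [Finset.sum_add_distrib, Finset.sum_ite_eq' (Finset.range N') i]
        simp [Finset.mem_range.2 hiN', sub_eq_add_neg]
      have h2 := hchain N' hiN'
      have h3 := hBb N'
      have h4 := hSbound N' hiN'
      have h5 : 0 ≤ (φ N' - φ 0) * tailSum a N' :=
        mul_nonneg (hφsub N') (hTnn N' hiN')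
      have h6 : -(a i * (φ i - φ 0)) ≤ |a i * (φ i - φ 0)| := neg_le_abs _
      calc ∑ k ∈ Finset.range N, g k ≤ ∑ k ∈ Finset.range N', g k := hmono
        _ = ∑ k ∈ Finset.range N', a k * (φ k - φ 0) - a i * (φ i - φ 0) := h1
        _ ≤ ∑' k, gb k + |b i * (φ i - φ 0)| + ∑' k, g2 k + |a i * (φ i - φ 0)| := by linarith
    exact summable_of_sum_range_le hgnn hbound
  have haφ0 : Summable (fun k => a k * (φ k - φ 0)) := by
    have : Summable (fun k => g k - (if k = i then -(a i * (φ i - φ 0)) else 0)) := by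
      refine hsumg.sub ?_
      exact summable_of_ne_finset_zero (s := {i}) (fun k hk => by simp at hk; simp [if_neg hk])
    exact this.congr fun k => by simp [hg]
  have haφ : Summable (fun k => a k * φ k) := by
    have : Summable (fun k => a k * (φ k - φ 0) + φ 0 * a k) :=
      haφ0.add (hsa.mul_left (φ 0))
    exact this.congr fun k => by ring
  refine ⟨haφ, ?_⟩
  -- limits
  have hlimA : Tendsto (fun N => ∑ k ∈ Finset.range N, a k * (φ k - φ 0)) atTop
      (𝓝 (∑' k, a k * (φ k - φ 0))) := haφ0.hasSum.tendsto_sum_nat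
  have hlimB : Tendsto (fun N => ∑ k ∈ Finset.range N, b k * (φ k - φ 0)) atTop
      (𝓝 (∑' k, b k * (φ k - φ 0))) := hbφ0.hasSum.tendsto_sum_nat
  -- error terms tend to 0
  have herr : ∀ (f : ℕ → ℝ), Summable f → (∀ k, k ≠ i → 0 ≤ f k) → Summable (fun k => f k * φ k) →
      Tendsto (fun N => (φ N - φ 0) * tailSum f N) atTop (𝓝 0) := by
    intro f hf hfnn hfφ
    have h1 : ∀ᶠ N in atTop, 0 ≤ (φ N - φ 0) * tailSum f N := by
      filter_upwards [eventually_gt_atTop i] with N hN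
      exact mul_nonneg (hφsub N) (tailSum_nonneg fun j hj => hfnn j (by omega))
    have h2 : ∀ᶠ N in atTop, (φ N - φ 0) * tailSum f N ≤ tailSum (fun k => f k * φ k) N := by
      filter_upwards [eventually_gt_atTop i] with N hN
      have ha1 : (φ N - φ 0) * tailSum f N ≤ φ N * tailSum f N :=
        mul_le_mul_of_nonneg_right (by linarith [hφ0 0]) (tailSum_nonneg fun j hj => hfnn j (by omega))
      exact ha1.trans (tailSum_mul_le hN hf hfnn φ hfφ hφ0 hφm)
    have h3 := tailSum_tendsto_zero hfφ
    exact squeeze_zero' h1 h2 h3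
  have herrA := herr a hsa ha haφ
  have herrB := herr b hsb hb hbφ
  have hfinal : ∀ᶠ N in atTop, ∑ k ∈ Finset.range N, a k * (φ k - φ 0)
      ≤ ∑ k ∈ Finset.range N, b k * (φ k - φ 0) + (φ N - φ 0) * tailSum b N
          - (φ N - φ 0) * tailSum a N := by
    filter_upwards [eventually_gt_atTop i] with N hN using hchain N hN
  have hlimR : Tendsto (fun N => ∑ k ∈ Finset.range N, b k * (φ k - φ 0)
      + (φ N - φ 0) * tailSum b N - (φ N - φ 0) * tailSum a N) atTop
      (𝓝 (∑' k, b k * (φ k - φ 0) + 0 - 0)) := (hlimB.add herrB).sub herrA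
  have := le_of_tendsto_of_tendsto hlimA hlimR hfinal
  simpa using this

lemma offDiag_nonneg {q : ℕ → ℕ → ℝ} (hq : IsQMatrix q) (i k : ℕ) : 0 ≤ _root_.offDiag q i k := by
  unfold _root_.offDiag
  by_cases hk : k = i
  · simp [hk]
  · simpa [hk] using hq.1 i k (fun h => hk h.symm)

lemma max_principle (q : ℕ → ℕ → ℝ) (hq : IsQMatrix q) (hcons : IsConservative q)
    (ψ : ℕ → ℝ) (hψ1 : ∀ k, 1 ≤ ψ k) (hψtop : Tendsto ψ atTop atTop)
    (c : ℝ) (hc : 0 ≤ c)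
    (hψsum : ∀ i, Summable fun k => offDiag q i k * ψ k)
    (hψLyap : ∀ i, (∑' k, offDiag q i k * ψ k) ≤ (c - q i i) * ψ i)
    (lam : ℝ) (hlam : c < lam)
    (x : ℕ → ℝ) (hx0 : ∀ k, 0 ≤ x k) (hx1 : ∀ k, x k ≤ 1)
    (heq : ∀ i, (lam - q i i) * x i = ∑' k, offDiag q i k * x k) :
    ∀ k, x k = 0 := by
  have hlam0 : 0 < lam := lt_of_le_of_lt hc hlam
  have key : ∀ ε, 0 < ε → ∀ k, x k ≤ ε * ψ k := by
    intro ε hε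
    set u : ℕ → ℝ := fun k => x k - ε * ψ k with hu
    have hub : Tendsto u atTop atBot := by
      have h1 : Tendsto (fun k => ε * ψ k) atTop atTop := Tendsto.const_mul_atTop hε hψtop
      have h2 : Tendsto (fun k => -(ε * ψ k)) atTop atBot := tendsto_neg_atTop_atBot.comp h1
      have h3 : Tendsto (fun k => 1 + -(ε * ψ k)) atTop atBot := by
        simpa using tendsto_atBot_add_const_left atTop (1:ℝ) h2
      refine tendsto_atBot_mono (fun k => ?_) h3
      have := hx1 k; simp only [hu]; linarith
    rw [← Nat.cofinite_eq_atTop] at hub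
    obtain ⟨i0, hi0⟩ := hub.exists_forall_ge
    -- show u i0 ≤ 0
    have S1 : Summable (fun k => offDiag q i0 k) := hq.2.2.1 i0
    have S2 : Summable (fun k => offDiag q i0 k * ψ k) := hψsum i0
    have S3 : Summable (fun k => offDiag q i0 k * x k) :=
      Summable.of_nonneg_of_le (fun k => mul_nonneg (offDiag_nonneg hq i0 k) (hx0 k))
        (fun k => mul_le_of_le_one_right (offDiag_nonneg hq i0 k) (hx1 k)) S1
    have hterm : ∀ k, offDiag q i0 k * x k ≤ offDiag q i0 k * u i0 + ε * (offDiag q i0 k * ψ k) := by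
      intro k
      have h1 : x k ≤ u i0 + ε * ψ k := by have := hi0 k; simp only [hu] at this ⊢; linarith
      have := mul_le_mul_of_nonneg_left h1 (offDiag_nonneg hq i0 k)
      linarith [this]
    have hsum2 : Summable (fun k => offDiag q i0 k * u i0 + ε * (offDiag q i0 k * ψ k)) :=
      (S1.mul_right (u i0)).add (S2.mul_left ε)
    have h4 : (∑' k, offDiag q i0 k * x k) ≤ ∑' k, (offDiag q i0 k * u i0 + ε * (offDiag q i0 k * ψ k)) :=
      Summable.tsum_le_tsum hterm S3 hsum2
    have h5 : ∑' k, (offDiag q i0 k * u i0 + ε * (offDiag q i0 k * ψ k))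
        = (-q i0 i0) * u i0 + ε * (∑' k, offDiag q i0 k * ψ k) := by
      rw [Summable.tsum_add (S1.mul_right (u i0)) (S2.mul_left ε), tsum_mul_right, tsum_mul_left, hcons i0]
    have h6 : (∑' k, offDiag q i0 k * ψ k) ≤ (c - q i0 i0) * ψ i0 := hψLyap i0
    have h7 := heq i0
    have hx : x i0 = u i0 + ε * ψ i0 := by simp [hu]
    have hQ : 0 ≤ -q i0 i0 := by linarith [hq.2.1 i0]
    have hψ0 : (1:ℝ) ≤ ψ i0 := hψ1 i0
    -- combine
    have h8 : (lam - q i0 i0) * (u i0 + ε * ψ i0) ≤ (-q i0 i0) * u i0 + ε * ((c - q i0 i0) * ψ i0) := by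
      rw [← hx, h7]
      calc (∑' k, offDiag q i0 k * x k) ≤ _ := h4
        _ = (-q i0 i0) * u i0 + ε * (∑' k, offDiag q i0 k * ψ k) := h5
        _ ≤ (-q i0 i0) * u i0 + ε * ((c - q i0 i0) * ψ i0) := by nlinarith
    have h9 : lam * u i0 ≤ ε * (c - lam) * ψ i0 := by nlinarith
    have hA : 0 < ε * (lam - c) := mul_pos hε (sub_pos.2 hlam)
    have hB : ε * (lam - c) * 1 ≤ ε * (lam - c) * ψ i0 := mul_le_mul_of_nonneg_left hψ0 hA.le
    have h10 : u i0 ≤ 0 := by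
      by_contra hcon
      push_neg at hcon
      have := mul_pos hlam0 hcon
      nlinarith
    intro k
    have := hi0 k
    simp only [hu] at this ⊢
    linarith
  intro k
  refine le_antisymm ?_ (hx0 k)
  by_contra hpos
  push_neg at hpos
  have hψk : (0:ℝ) < ψ k := lt_of_lt_of_le one_pos (hψ1 k)
  have hε : 0 < x k / (2 * ψ k) := by positivity
  have h1 := key _ hε k
  have h2 : (x k / (2 * ψ k)) * ψ k = x k / 2 := by
    field_simp
  rw [h2] at h1
  linarith

lemma aemeasurable_primitive {ψ : ℝ → ℝ} (hψ : ∀ s, 0 ≤ s → 0 ≤ ψ s) :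
    AEMeasurable (fun t => ∫ s in (0:ℝ)..t, ψ s) (volume.restrict (Ici (0:ℝ))) := by
  set F := fun t => ∫ s in (0:ℝ)..t, ψ s with hF
  set A := {t : ℝ | 0 ≤ t ∧ IntervalIntegrable ψ volume 0 t} with hA
  have hsub : A ⊆ Ici (0:ℝ) := fun t ht => ht.1
  have hOrd : A.OrdConnected := by
    constructor
    intro t1 h1 t2 h2 t ht
    refine ⟨le_trans h1.1 ht.1, h2.2.mono_set ?_⟩
    refine uIcc_subset_uIcc left_mem_uIcc ?_
    rw [uIcc_of_le h2.1]
    exact ⟨le_trans h1.1 ht.1, ht.2⟩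
  have hAmeas : MeasurableSet A := hOrd.measurableSet
  have hmono : MonotoneOn F A := by
    intro t1 h1 t2 h2 h12
    have hint1 : IntervalIntegrable ψ volume 0 t1 := h1.2
    have hint2 : IntervalIntegrable ψ volume t1 t2 := by
      refine h2.2.mono_set (uIcc_subset_uIcc ?_ ?_)
      · rw [uIcc_of_le h2.1]; exact ⟨h1.1, le_trans h12 le_rfl⟩
      · rw [uIcc_of_le h2.1]; exact ⟨le_trans h1.1 h12, le_rfl⟩
    have hadd := intervalIntegral.integral_add_adjacent_intervals hint1 hint2
    have hpos : 0 ≤ ∫ s in t1..t2, ψ s :=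
      intervalIntegral.integral_nonneg h12 (fun u hu => hψ u (le_trans h1.1 hu.1))
    simp only [hF]
    rw [← hadd]
    linarith
  have h1 : AEMeasurable F (volume.restrict A) := aemeasurable_restrict_of_monotoneOn hAmeas hmono
  have hdiffmeas : MeasurableSet (Ici (0:ℝ) \ A) := measurableSet_Ici.diff hAmeas
  have h2 : AEMeasurable F (volume.restrict (Ici (0:ℝ) \ A)) := by
    have hz : ∀ t ∈ Ici (0:ℝ) \ A, F t = 0 := fun t ht =>
      intervalIntegral.integral_undef (fun h => ht.2 ⟨ht.1, h⟩)
    refine (aemeasurable_const (b := (0:ℝ))).congr ?_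
    rw [Filter.EventuallyEq, ae_restrict_iff' hdiffmeas]
    exact ae_of_all _ fun t ht => (hz t ht).symm
  have h3 : AEMeasurable F (volume.restrict A + volume.restrict (Ici (0:ℝ) \ A)) :=
    h1.add_measure h2
  have hres : volume.restrict (Ici (0:ℝ)) = volume.restrict A + volume.restrict (Ici (0:ℝ) \ A) := by
    rw [← Measure.restrict_union disjoint_sdiff_self_right hdiffmeas, Set.union_diff_cancel hsub]
  rw [hres]
  exact h3

lemma integral_exp_factor (a t : ℝ) :
    ∫ s in (0:ℝ)..t, Real.exp (a*(t-s)) * (-a) = 1 - Real.exp (a*t) := by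
  have hderiv : ∀ x ∈ uIcc (0:ℝ) t,
      HasDerivAt (fun s => Real.exp (a*(t-s))) (Real.exp (a*(t-x)) * (-a)) x := by
    intro x _
    have h1 : HasDerivAt (fun s : ℝ => a*(t-s)) (-a) x := by
      have := ((hasDerivAt_id x).const_sub t).const_mul a
      simpa using this
    simpa using h1.exp
  have hint : IntervalIntegrable (fun s => Real.exp (a*(t-s)) * (-a)) volume 0 t := by
    apply Continuous.intervalIntegrable
    continuity
  have hres := intervalIntegral.integral_eq_sub_of_hasDerivAt hderiv hint
  rw [hres]
  simp

lemma integral_exp_Ioi {b : ℝ} (s : ℝ) (hb : 0 < b) :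
    ∫ t in Ioi s, Real.exp (-(b*t)) = Real.exp (-(b*s))/b := by
  have hderiv : ∀ x ∈ Ioi s, HasDerivAt (fun t => -(Real.exp (-(b*t))/b)) (Real.exp (-(b*x))) x := by
    intro x _
    have h1 : HasDerivAt (fun t : ℝ => -(b*t)) (-b) x := by
      simpa using ((hasDerivAt_id x).const_mul (-b))
    have h2 := (h1.exp.div_const b).neg
    exact h2.congr_deriv (by rw [mul_neg, neg_div, neg_neg, mul_div_assoc, div_self hb.ne', mul_one])
  have hint : IntegrableOn (fun t => Real.exp (-(b*t))) (Ioi s) volume := by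
    have := exp_neg_integrableOn_Ioi s hb
    refine this.congr_fun ?_ measurableSet_Ioi
    intro t _; simp [neg_mul]
  have htend : Tendsto (fun t => -(Real.exp (-(b*t))/b)) atTop (𝓝 0) := by
    have h1 : Tendsto (fun t : ℝ => b*t) atTop atTop := Tendsto.const_mul_atTop hb tendsto_id
    have h2 := Real.tendsto_exp_neg_atTop_nhds_zero.comp h1
    have h3 := (h2.div_const b).neg
    simpa using h3
  have hcont : ContinuousWithinAt (fun t => -(Real.exp (-(b*t))/b)) (Ici s) s := by
    refine Continuous.continuousWithinAt ?_
    continuity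
  have := MeasureTheory.integral_Ioi_of_hasDerivAt_of_tendsto hcont hderiv hint htend
  rw [this]
  field_simp
  ring

variable {q : ℕ → ℕ → ℝ} {P : ℝ → ℕ → ℕ → ℝ}

noncomputable def dfn (P : ℝ → ℕ → ℕ → ℝ) (k : ℕ) (t : ℝ) : ℝ := 1 - ∑' j, P t k j

lemma P_le_one (hP : IsTransitionFunction P) {t : ℝ} (ht : 0 ≤ t) (k j : ℕ) : P t k j ≤ 1 := by
  refine le_trans ?_ (hP.2.2.1 t k ht)
  exact Summable.le_tsum (hP.2.1 t k ht) j (fun j' _ => hP.1 t k j' ht)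

lemma ite_offDiag (q : ℕ → ℕ → ℝ) (i k : ℕ) (y : ℝ) :
    (if k = i then 0 else q i k * y) = _root_.offDiag q i k * y := by
  unfold _root_.offDiag; split <;> simp

lemma P_aemeas (hq : IsQMatrix q) (hP : IsTransitionFunction P) (hB : BackwardEq q P) (k j : ℕ) :
    AEMeasurable (fun t => P t k j) (volume.restrict (Ici (0:ℝ))) := by
  set h : ℝ → ℝ := fun s => ∑' m, if m = k then 0 else q k m * P s m j with hh
  set ψ : ℝ → ℝ := fun s => Real.exp (-(q k k) * s) * h s with hψdef
  have hψnn : ∀ s, 0 ≤ s → 0 ≤ ψ s := by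
    intro s hs
    refine mul_nonneg (Real.exp_nonneg _) (tsum_nonneg fun m => ?_)
    rw [ite_offDiag]
    exact mul_nonneg (offDiag_nonneg hq k m) (hP.1 s m j hs)
  have key : ∀ t, 0 ≤ t → P t k j
      = (if k = j then 1 else 0) * Real.exp (q k k * t)
        + Real.exp (q k k * t) * ∫ s in (0:ℝ)..t, ψ s := by
    intro t ht
    rw [hB t k j ht]
    congr 1
    have hcg : ∀ s : ℝ, Real.exp (q k k * (t - s)) * h s
        = Real.exp (q k k * t) * ψ s := by
      intro s
      have h2 : Real.exp (q k k * t) * Real.exp (-(q k k) * s) = Real.exp (q k k * (t - s)) := by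
        rw [← Real.exp_add]; congr 1; ring
      rw [hψdef]; dsimp only; rw [← mul_assoc, h2]
    calc ∫ s in (0:ℝ)..t, Real.exp (q k k * (t - s)) * h s
        = ∫ s in (0:ℝ)..t, Real.exp (q k k * t) * ψ s :=
          intervalIntegral.integral_congr (fun s _ => hcg s)
      _ = Real.exp (q k k * t) * ∫ s in (0:ℝ)..t, ψ s :=
          intervalIntegral.integral_const_mul _ _
  have hmeas : AEMeasurable (fun t => (if k = j then 1 else 0) * Real.exp (q k k * t)
      + Real.exp (q k k * t) * ∫ s in (0:ℝ)..t, ψ s) (volume.restrict (Ici (0:ℝ))) := by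
    have hexp : Measurable (fun t : ℝ => Real.exp (q k k * t)) :=
      Real.measurable_exp.comp (measurable_id.const_mul _)
    exact ((hexp.const_mul _).aemeasurable).add
      (hexp.aemeasurable.mul (aemeasurable_primitive hψnn))
  refine hmeas.congr ?_
  rw [Filter.EventuallyEq, ae_restrict_iff' measurableSet_Ici]
  exact ae_of_all _ fun t ht => (key t ht).symm

lemma tsum_mul_aemeas {c : ℕ → ℝ} (hc : ∀ k, 0 ≤ c k) {f : ℕ → ℝ → ℝ}
    (hf : ∀ k, AEMeasurable (f k) (volume.restrict (Ici (0:ℝ))))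
    (hfnn : ∀ k s, 0 ≤ s → 0 ≤ f k s)
    (hsum : ∀ s, 0 ≤ s → Summable (fun k => c k * f k s)) :
    AEMeasurable (fun s => ∑' k, c k * f k s) (volume.restrict (Ici (0:ℝ))) := by
  have h1 : AEMeasurable (fun s => (∑' k, ENNReal.ofReal (c k * f k s)).toReal)
      (volume.restrict (Ici (0:ℝ))) := by
    refine ENNReal.measurable_toReal.comp_aemeasurable ?_
    exact AEMeasurable.ennreal_tsum fun k =>
      ENNReal.measurable_ofReal.comp_aemeasurable ((hf k).const_mul (c k))
  refine h1.congr ?_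
  rw [Filter.EventuallyEq, ae_restrict_iff' measurableSet_Ici]
  refine ae_of_all _ fun s hs => ?_
  have hnn : ∀ k, 0 ≤ c k * f k s := fun k => mul_nonneg (hc k) (hfnn k s hs)
  rw [← ENNReal.ofReal_tsum_of_nonneg hnn (hsum s hs),
    ENNReal.toReal_ofReal (tsum_nonneg hnn)]

lemma d_mono (hP : IsTransitionFunction P) (k : ℕ) : MonotoneOn (dfn P k) (Ici (0:ℝ)) := by
  intro t1 h1 t2 h2 h12
  unfold dfn
  have hs' : (0:ℝ) ≤ t2 - t1 := by linarith
  have hCK : ∀ j, P t2 k j = ∑' m, P t1 k m * P (t2 - t1) m j := by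
    intro j
    have := hP.2.2.2.2 t1 (t2 - t1) k j h1 hs'
    rwa [show t1 + (t2 - t1) = t2 by ring] at this
  have hsum1 : ∀ m, Summable (fun j => P t1 k m * P (t2 - t1) m j) :=
    fun m => (hP.2.1 _ m hs').mul_left _
  have hsum2 : Summable (fun m => ∑' j, P t1 k m * P (t2 - t1) m j) := by
    refine Summable.of_nonneg_of_le (fun m => tsum_nonneg fun j =>
      mul_nonneg (hP.1 _ k m h1) (hP.1 _ m j hs')) (fun m => ?_) (hP.2.1 t1 k h1)
    rw [tsum_mul_left]
    exact mul_le_of_le_one_right (hP.1 _ k m h1) (hP.2.2.1 _ m hs')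
  have hswap : ∑' j, P t2 k j = ∑' m, ∑' j, P t1 k m * P (t2 - t1) m j := by
    rw [tsum_congr hCK]
    exact tsum_swap (fun m j => mul_nonneg (hP.1 _ k m h1) (hP.1 _ m j hs')) hsum1 hsum2
  have hle : ∑' j, P t2 k j ≤ ∑' j, P t1 k j := by
    rw [hswap]
    refine le_trans (Summable.tsum_le_tsum (fun m => ?_) hsum2 (hP.2.1 t1 k h1)) le_rfl
    rw [tsum_mul_left]
    exact mul_le_of_le_one_right (hP.1 _ k m h1) (hP.2.2.1 _ m hs')
  linarith

lemma d_zero (hP : IsTransitionFunction P) (k : ℕ) : dfn P k 0 = 0 := by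
  unfold dfn
  have : ∀ j, P 0 k j = if j = k then 1 else 0 := by
    intro j; rw [hP.2.2.2.1 k j]; by_cases h : k = j <;> simp [h, eq_comm]
  rw [tsum_congr this, tsum_ite_eq]
  ring

lemma d_nonneg (hP : IsTransitionFunction P) (k : ℕ) {t : ℝ} (ht : 0 ≤ t) : 0 ≤ dfn P k t := by
  unfold dfn; linarith [hP.2.2.1 t k ht]

lemma d_le_one (hP : IsTransitionFunction P) (k : ℕ) {t : ℝ} (ht : 0 ≤ t) : dfn P k t ≤ 1 := by
  unfold dfn
  have : 0 ≤ ∑' j, P t k j := tsum_nonneg (fun j => hP.1 t k j ht)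
  linarith

lemma d_aemeas (hP : IsTransitionFunction P) (k : ℕ) :
    AEMeasurable (dfn P k) (volume.restrict (Ici (0:ℝ))) :=
  aemeasurable_restrict_of_monotoneOn measurableSet_Ici (d_mono hP k)

lemma g_summable (hq : IsQMatrix q) (hP : IsTransitionFunction P) (i : ℕ) {s : ℝ} (hs : 0 ≤ s) :
    Summable (fun k => _root_.offDiag q i k * dfn P k s) :=
  Summable.of_nonneg_of_le
    (fun k => mul_nonneg (offDiag_nonneg hq i k) (d_nonneg hP k hs))
    (fun k => mul_le_of_le_one_right (offDiag_nonneg hq i k) (d_le_one hP k hs))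
    (hq.2.2.1 i)

lemma g_aemeas (hq : IsQMatrix q) (hP : IsTransitionFunction P) (i : ℕ) :
    AEMeasurable (fun s => ∑' k, _root_.offDiag q i k * dfn P k s)
      (volume.restrict (Ici (0:ℝ))) :=
  tsum_mul_aemeas (offDiag_nonneg hq i) (fun k => d_aemeas hP k)
    (fun k s hs => d_nonneg hP k hs) (fun s hs => g_summable hq hP i hs)

lemma g_nonneg (hq : IsQMatrix q) (hP : IsTransitionFunction P) (i : ℕ) {s : ℝ} (hs : 0 ≤ s) :
    0 ≤ ∑' k, _root_.offDiag q i k * dfn P k s :=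
  tsum_nonneg fun k => mul_nonneg (offDiag_nonneg hq i k) (d_nonneg hP k hs)

lemma g_le (hq : IsQMatrix q) (hcons : IsConservative q) (hP : IsTransitionFunction P)
    (i : ℕ) {s : ℝ} (hs : 0 ≤ s) :
    (∑' k, _root_.offDiag q i k * dfn P k s) ≤ -q i i := by
  rw [← hcons i]
  exact Summable.tsum_le_tsum
    (fun k => mul_le_of_le_one_right (offDiag_nonneg hq i k) (d_le_one hP k hs))
    (g_summable hq hP i hs) (hq.2.2.1 i)

lemma homog (hq : IsQMatrix q) (hcons : IsConservative q) (hP : IsTransitionFunction P)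
    (hB : BackwardEq q P) (i : ℕ) {t : ℝ} (ht : 0 ≤ t) :
    dfn P i t = ∫ s in (0:ℝ)..t,
      Real.exp (q i i * (t - s)) * (∑' k, _root_.offDiag q i k * dfn P k s) := by
  classical
  set g : ℝ → ℝ := fun s => ∑' k, _root_.offDiag q i k * dfn P k s with hgdef
  set h : ℕ → ℝ → ℝ := fun j s => ∑' k, _root_.offDiag q i k * P s k j with hhdef
  set G : ℕ → ℝ → ℝ := fun j s => Real.exp (q i i * (t - s)) * h j s with hGdef
  have hQ0 : 0 ≤ -q i i := neg_nonneg.2 (hq.2.1 i)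
  have hSod : Summable (fun k => _root_.offDiag q i k) := hq.2.2.1 i
  have hodP_sum : ∀ (j : ℕ) (s : ℝ), 0 ≤ s → Summable (fun k => _root_.offDiag q i k * P s k j) :=
    fun j s hs => Summable.of_nonneg_of_le
      (fun k => mul_nonneg (offDiag_nonneg hq i k) (hP.1 s k j hs))
      (fun k => mul_le_of_le_one_right (offDiag_nonneg hq i k) (P_le_one hP hs k j)) hSod
  have hhnn : ∀ j s, 0 ≤ s → 0 ≤ h j s := fun j s hs =>
    tsum_nonneg fun k => mul_nonneg (offDiag_nonneg hq i k) (hP.1 s k j hs)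
  have hhle : ∀ j s, 0 ≤ s → h j s ≤ -q i i := by
    intro j s hs
    rw [← hcons i]
    exact Summable.tsum_le_tsum
      (fun k => mul_le_of_le_one_right (offDiag_nonneg hq i k) (P_le_one hP hs k j))
      (hodP_sum j s hs) hSod
  have hexp_le : ∀ s : ℝ, s ∈ Ioc 0 t → Real.exp (q i i * (t - s)) ≤ 1 := by
    intro s hs
    rw [show (1:ℝ) = Real.exp 0 by simp, Real.exp_le_exp]
    exact mul_nonpos_of_nonpos_of_nonneg (hq.2.1 i) (by linarith [hs.2])
  have hGnn : ∀ j s, s ∈ Ioc (0:ℝ) t → 0 ≤ G j s := fun j s hs =>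
    mul_nonneg (Real.exp_nonneg _) (hhnn j s hs.1.le)
  have hGle : ∀ j s, s ∈ Ioc (0:ℝ) t → G j s ≤ -q i i := by
    intro j s hs
    calc G j s ≤ 1 * h j s := by
          exact mul_le_mul_of_nonneg_right (hexp_le s hs) (hhnn j s hs.1.le)
      _ = h j s := one_mul _
      _ ≤ -q i i := hhle j s hs.1.le
  have hexpmeas : Measurable (fun s : ℝ => Real.exp (q i i * (t - s))) :=
    Real.measurable_exp.comp ((measurable_const.sub measurable_id).const_mul _)
  have hIocIci : Ioc (0:ℝ) t ⊆ Ici (0:ℝ) := fun x hx => hx.1.le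
  have hresle : volume.restrict (Ioc (0:ℝ) t) ≤ volume.restrict (Ici (0:ℝ)) :=
    Measure.restrict_mono hIocIci le_rfl
  have hmeash : ∀ j, AEMeasurable (h j) (volume.restrict (Ioc (0:ℝ) t)) := by
    intro j
    refine AEMeasurable.mono_measure ?_ hresle
    exact tsum_mul_aemeas (offDiag_nonneg hq i) (fun k => P_aemeas hq hP hB k j)
      (fun k s hs => hP.1 s k j hs) (fun s hs => hodP_sum j s hs)
  have hmeasG : ∀ j, AEMeasurable (G j) (volume.restrict (Ioc (0:ℝ) t)) :=
    fun j => hexpmeas.aemeasurable.mul (hmeash j)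
  have hconstInt : IntegrableOn (fun _ : ℝ => -q i i) (Ioc (0:ℝ) t) volume :=
    integrableOn_const measure_Ioc_lt_top.ne
  have hintG : ∀ j, IntegrableOn (G j) (Ioc (0:ℝ) t) volume := by
    intro j
    refine Integrable.mono' hconstInt (hmeasG j).aestronglyMeasurable ?_
    rw [ae_restrict_iff' measurableSet_Ioc]
    refine ae_of_all _ fun s hs => ?_
    rw [Real.norm_eq_abs, abs_of_nonneg (hGnn j s hs)]
    exact hGle j s hs
  have hBj : ∀ j, ∫ s in Ioc (0:ℝ) t, G j s
      = P t i j - (if i = j then 1 else 0) * Real.exp (q i i * t) := by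
    intro j
    have hb := hB t i j ht
    have heqf : (fun s => Real.exp (q i i * (t - s)) * (∑' k, if k = i then 0 else q i k * P s k j))
        = G j := by
      funext s
      rw [hGdef, hhdef]; dsimp only
      congr 1
      exact tsum_congr fun k => ite_offDiag q i k _
    rw [intervalIntegral.integral_of_le ht, heqf] at hb
    linarith
  have hδsum : Summable (fun j => (if i = j then 1 else 0) * Real.exp (q i i * t)) := by
    refine summable_of_ne_finset_zero (s := {i}) fun j hj => ?_
    simp only [Finset.mem_singleton] at hj
    simp [Ne.symm hj]
  have hsumInt : Summable (fun j => ∫ s in Ioc (0:ℝ) t, G j s) := by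
    refine Summable.congr (((hP.2.1 t i ht).sub hδsum)) fun j => (hBj j).symm
  have hintnn : ∀ j, 0 ≤ ∫ s in Ioc (0:ℝ) t, G j s := fun j =>
    setIntegral_nonneg measurableSet_Ioc (fun s hs => hGnn j s hs)
  have hswap : ∫ s in Ioc (0:ℝ) t, (∑' j, G j s) = ∑' j, ∫ s in Ioc (0:ℝ) t, G j s := by
    refine integral_tsum (fun j => (hmeasG j).aestronglyMeasurable) ?_
    have heq : ∀ j, ∫⁻ s in Ioc (0:ℝ) t, ‖G j s‖ₑ
        = ENNReal.ofReal (∫ s in Ioc (0:ℝ) t, G j s) := by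
      intro j
      rw [ofReal_integral_eq_lintegral_ofReal (hintG j)
        ((ae_restrict_iff' measurableSet_Ioc).2 (ae_of_all _ fun s hs => hGnn j s hs))]
      refine lintegral_congr_ae ?_
      rw [Filter.EventuallyEq, ae_restrict_iff' measurableSet_Ioc]
      refine ae_of_all _ fun s hs => ?_
      rw [← ofReal_norm, Real.norm_eq_abs, abs_of_nonneg (hGnn j s hs)]
    rw [tsum_congr heq, ← ENNReal.ofReal_tsum_of_nonneg hintnn hsumInt]
    exact ENNReal.ofReal_ne_top
  have hgood : ∀ s, 0 ≤ s → (∑' j, G j s) = Real.exp (q i i * (t - s)) * ((-q i i) - g s) := by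
    intro s hs0
    have h1 : ∑' j, G j s = Real.exp (q i i * (t - s)) * ∑' j, h j s := by
      rw [hGdef]; dsimp only; exact tsum_mul_left
    have hsum_h : Summable (fun k => ∑' j, _root_.offDiag q i k * P s k j) := by
      refine Summable.of_nonneg_of_le (fun k => tsum_nonneg fun j =>
        mul_nonneg (offDiag_nonneg hq i k) (hP.1 s k j hs0)) (fun k => ?_) hSod
      rw [tsum_mul_left]
      exact mul_le_of_le_one_right (offDiag_nonneg hq i k) (hP.2.2.1 s k hs0)
    have h2 : ∑' j, h j s = ∑' k, _root_.offDiag q i k * (∑' j, P s k j) := by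
      rw [hhdef]; dsimp only
      rw [tsum_swap (fun k j => mul_nonneg (offDiag_nonneg hq i k) (hP.1 s k j hs0))
        (fun k => (hP.2.1 s k hs0).mul_left _) hsum_h]
      exact tsum_congr fun k => tsum_mul_left
    have h3 : ∑' k, _root_.offDiag q i k * (∑' j, P s k j) = (-q i i) - g s := by
      have hsplit : ∀ k, _root_.offDiag q i k * (∑' j, P s k j)
          = _root_.offDiag q i k - _root_.offDiag q i k * dfn P k s := by
        intro k; unfold dfn; ring
      rw [tsum_congr hsplit, Summable.tsum_sub hSod (g_summable hq hP i hs0), hcons i, hgdef]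
    rw [h1, h2, h3]
  have hint_expQ : IntegrableOn (fun s => Real.exp (q i i * (t - s)) * (-q i i))
      (Ioc (0:ℝ) t) volume := by
    apply Continuous.integrableOn_Ioc
    continuity
  have hint_expg : IntegrableOn (fun s => Real.exp (q i i * (t - s)) * g s)
      (Ioc (0:ℝ) t) volume := by
    refine Integrable.mono' hconstInt
      ((hexpmeas.aemeasurable.mul ((g_aemeas hq hP i).mono_measure hresle)).aestronglyMeasurable) ?_
    rw [ae_restrict_iff' measurableSet_Ioc]
    refine ae_of_all _ fun s hs => ?_
    rw [Real.norm_eq_abs, abs_of_nonneg (mul_nonneg (Real.exp_nonneg _) (g_nonneg hq hP i hs.1.le))]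
    calc Real.exp (q i i * (t - s)) * g s ≤ 1 * g s :=
          mul_le_mul_of_nonneg_right (hexp_le s hs) (g_nonneg hq hP i hs.1.le)
      _ = g s := one_mul _
      _ ≤ -q i i := g_le hq hcons hP i hs.1.le
  have hsplit2 : ∫ s in Ioc (0:ℝ) t, (∑' j, G j s)
      = (∫ s in Ioc (0:ℝ) t, Real.exp (q i i * (t - s)) * (-q i i))
        - ∫ s in Ioc (0:ℝ) t, Real.exp (q i i * (t - s)) * g s := by
    rw [setIntegral_congr_fun measurableSet_Ioc (fun s hs => hgood s hs.1.le)]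
    rw [← integral_sub hint_expQ hint_expg]
    refine setIntegral_congr_fun measurableSet_Ioc fun s hs => ?_
    ring
  have hexpQ_val : ∫ s in Ioc (0:ℝ) t, Real.exp (q i i * (t - s)) * (-q i i)
      = 1 - Real.exp (q i i * t) := by
    rw [← intervalIntegral.integral_of_le ht]
    exact integral_exp_factor (q i i) t
  -- sum the backward equation over j
  have hδtsum : ∑' j, (if i = j then 1 else 0) * Real.exp (q i i * t) = Real.exp (q i i * t) := by
    have : ∀ j, (if i = j then 1 else 0) * Real.exp (q i i * t)
        = if j = i then Real.exp (q i i * t) else 0 := by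
      intro j
      by_cases hj : j = i
      · simp [hj]
      · rw [if_neg (fun h : i = j => hj h.symm), if_neg hj, zero_mul]
    rw [tsum_congr this, tsum_ite_eq]
  have hPsum : ∑' j, P t i j = Real.exp (q i i * t) + ∑' j, ∫ s in Ioc (0:ℝ) t, G j s := by
    have hrow : ∀ j, P t i j
        = (if i = j then 1 else 0) * Real.exp (q i i * t) + ∫ s in Ioc (0:ℝ) t, G j s := by
      intro j; have := hBj j; linarith
    rw [tsum_congr hrow, Summable.tsum_add hδsum hsumInt, hδtsum]
  have hfinal : dfn P i t = ∫ s in Ioc (0:ℝ) t, Real.exp (q i i * (t - s)) * g s := by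
    unfold dfn
    rw [hPsum, ← hswap, hsplit2, hexpQ_val]
    ring
  rw [hfinal, ← intervalIntegral.integral_of_le ht]

lemma expg_integrable (hq : IsQMatrix q) (hcons : IsConservative q)
    (hP : IsTransitionFunction P) (i : ℕ) (t : ℝ) :
    IntegrableOn (fun s => Real.exp (q i i * (t - s)) * (∑' k, _root_.offDiag q i k * dfn P k s))
      (Ioc (0:ℝ) t) volume := by
  have hexpmeas : Measurable (fun s : ℝ => Real.exp (q i i * (t - s))) :=
    Real.measurable_exp.comp ((measurable_const.sub measurable_id).const_mul _)
  have hresle : volume.restrict (Ioc (0:ℝ) t) ≤ volume.restrict (Ici (0:ℝ)) :=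
    Measure.restrict_mono (fun x hx => hx.1.le) le_rfl
  have hconstInt : IntegrableOn (fun _ : ℝ => -q i i) (Ioc (0:ℝ) t) volume :=
    integrableOn_const measure_Ioc_lt_top.ne
  refine Integrable.mono' hconstInt
    ((hexpmeas.aemeasurable.mul ((g_aemeas hq hP i).mono_measure hresle)).aestronglyMeasurable) ?_
  rw [ae_restrict_iff' measurableSet_Ioc]
  refine ae_of_all _ fun s hs => ?_
  have hexp_le : Real.exp (q i i * (t - s)) ≤ 1 := by
    rw [show (1:ℝ) = Real.exp 0 by simp, Real.exp_le_exp]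
    exact mul_nonpos_of_nonpos_of_nonneg (hq.2.1 i) (by linarith [hs.2])
  rw [Real.norm_eq_abs,
    abs_of_nonneg (mul_nonneg (Real.exp_nonneg _) (g_nonneg hq hP i hs.1.le))]
  calc Real.exp (q i i * (t - s)) * (∑' k, _root_.offDiag q i k * dfn P k s)
      ≤ 1 * (∑' k, _root_.offDiag q i k * dfn P k s) :=
        mul_le_mul_of_nonneg_right hexp_le (g_nonneg hq hP i hs.1.le)
    _ = ∑' k, _root_.offDiag q i k * dfn P k s := one_mul _
    _ ≤ -q i i := g_le hq hcons hP i hs.1.le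

lemma honest (hq : IsQMatrix q) (hcons : IsConservative q)
    (ψ : ℕ → ℝ) (hψ1 : ∀ k, 1 ≤ ψ k) (hψtop : Tendsto ψ atTop atTop)
    (c : ℝ) (hc : 0 ≤ c)
    (hψsum : ∀ i, Summable fun k => _root_.offDiag q i k * ψ k)
    (hψLyap : ∀ i, (∑' k, _root_.offDiag q i k * ψ k) ≤ (c - q i i) * ψ i)
    (hP : IsTransitionFunction P) (hB : BackwardEq q P) :
    ∀ t, 0 ≤ t → ∀ i, (∑' j, P t i j) = 1 := by
  classical
  set lam : ℝ := c + 1 with hlamdef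
  have hlam1 : (1:ℝ) ≤ lam := by simp [hlamdef]; linarith
  have hlam0 : (0:ℝ) < lam := by linarith
  have hexpmeas : Measurable (fun t : ℝ => Real.exp (-(lam*t))) :=
    Real.measurable_exp.comp ((measurable_const.mul measurable_id).neg)
  have hIoiIci : volume.restrict (Ioi (0:ℝ)) ≤ volume.restrict (Ici (0:ℝ)) :=
    Measure.restrict_mono Ioi_subset_Ici_self le_rfl
  set X : ℕ → ENNReal := fun k =>
    ∫⁻ t in Ioi (0:ℝ), ENNReal.ofReal (Real.exp (-(lam*t)) * dfn P k t) with hXdef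
  have hXmeas : ∀ k, AEMeasurable (fun t => ENNReal.ofReal (Real.exp (-(lam*t)) * dfn P k t))
      (volume.restrict (Ioi (0:ℝ))) := fun k =>
    ENNReal.measurable_ofReal.comp_aemeasurable
      (hexpmeas.aemeasurable.mul ((d_aemeas hP k).mono_measure hIoiIci))
  have hXle : ∀ k, X k ≤ ENNReal.ofReal 1 := by
    intro k
    have h1 : X k ≤ ∫⁻ t in Ioi (0:ℝ), ENNReal.ofReal (Real.exp (-t)) := by
      refine lintegral_mono_ae ?_
      rw [ae_restrict_iff' measurableSet_Ioi]
      refine ae_of_all _ fun t ht => ENNReal.ofReal_le_ofReal ?_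
      have h2 : Real.exp (-(lam*t)) ≤ Real.exp (-t) := by
        rw [Real.exp_le_exp]
        have ht' : (0:ℝ) < t := ht
        nlinarith
      calc Real.exp (-(lam*t)) * dfn P k t ≤ Real.exp (-(lam*t)) * 1 :=
            mul_le_mul_of_nonneg_left (d_le_one hP k ht.le) (Real.exp_nonneg _)
        _ = Real.exp (-(lam*t)) := mul_one _
        _ ≤ Real.exp (-t) := h2
    have h3 : ∫⁻ t in Ioi (0:ℝ), ENNReal.ofReal (Real.exp (-t)) = ENNReal.ofReal 1 := by
      have hint : IntegrableOn (fun t : ℝ => Real.exp (-t)) (Ioi (0:ℝ)) volume := by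
        have := exp_neg_integrableOn_Ioi (0:ℝ) one_pos
        refine this.congr_fun (fun t _ => by norm_num) measurableSet_Ioi
      rw [← ofReal_integral_eq_lintegral_ofReal hint
        (ae_of_all _ fun t => Real.exp_nonneg _)]
      have hval : ∫ t in Ioi (0:ℝ), Real.exp (-t) = 1 := by
        have hE := integral_exp_Ioi (0:ℝ) one_pos
        simp only [mul_zero, neg_zero, Real.exp_zero, div_one] at hE
        rw [← hE]
        exact setIntegral_congr_fun measurableSet_Ioi fun t _ => by norm_num
      rw [hval]
    exact h1.trans h3.le
  have hXfin : ∀ k, X k ≠ ⊤ := fun k =>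
    (lt_of_le_of_lt (hXle k) ENNReal.ofReal_lt_top).ne
  -- the eigenvalue equation
  have hkey : ∀ i, ENNReal.ofReal (lam - q i i) * X i
      = ∑' k, ENNReal.ofReal (_root_.offDiag q i k) * X k := by
    intro i
    set b : ℝ := lam - q i i with hbdef
    have hqii : q i i ≤ 0 := hq.2.1 i
    have hb0 : 0 < b := by rw [hbdef]; linarith
    set g : ℝ → ℝ := fun s => ∑' k, _root_.offDiag q i k * dfn P k s with hgdef
    set F : ℝ → ℝ → ENNReal := fun t s =>
      if s ≤ t then ENNReal.ofReal ((b * Real.exp (-(lam*t))) * (Real.exp (q i i * (t - s)) * g s)) else 0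
      with hFdef
    -- claim 1: the Laplace-weighted defect as a double integral
    have hclaim : ∀ t : ℝ, 0 < t →
        ENNReal.ofReal (b * (Real.exp (-(lam*t)) * dfn P i t))
          = ∫⁻ s in Ioc (0:ℝ) t, ENNReal.ofReal
              ((b * Real.exp (-(lam*t))) * (Real.exp (q i i * (t - s)) * g s)) := by
      intro t ht
      have hd := homog hq hcons hP hB i ht.le
      rw [intervalIntegral.integral_of_le ht.le] at hd
      have hint : IntegrableOn (fun s => (b * Real.exp (-(lam*t)))
          * (Real.exp (q i i * (t - s)) * g s)) (Ioc (0:ℝ) t) volume :=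
        (expg_integrable hq hcons hP i t).const_mul _
      have hnn : 0 ≤ᵐ[volume.restrict (Ioc (0:ℝ) t)] fun s => (b * Real.exp (-(lam*t)))
          * (Real.exp (q i i * (t - s)) * g s) := by
        rw [Filter.EventuallyLE, ae_restrict_iff' measurableSet_Ioc]
        refine ae_of_all _ fun s hs => ?_
        have := g_nonneg hq hP i hs.1.le
        positivity
      rw [← ofReal_integral_eq_lintegral_ofReal hint hnn]
      congr 1
      rw [MeasureTheory.integral_const_mul, ← hd]
      ring
    -- rewrite X i with the double integral
    have hIocIic : ∀ t : ℝ, Iic t ∩ Ioi (0:ℝ) = Ioc (0:ℝ) t := by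
      intro t; ext x; simp only [mem_inter_iff, mem_Iic, mem_Ioi, mem_Ioc]; tauto
    have hXi : ENNReal.ofReal b * X i = ∫⁻ t in Ioi (0:ℝ), ∫⁻ s in Ioi (0:ℝ), F t s := by
      rw [hXdef]
      rw [← lintegral_const_mul' (ENNReal.ofReal b) _ ENNReal.ofReal_ne_top]
      refine lintegral_congr_ae ?_
      rw [Filter.EventuallyEq, ae_restrict_iff' measurableSet_Ioi]
      refine ae_of_all _ fun t ht => ?_
      have ht' : (0:ℝ) < t := ht
      rw [← ENNReal.ofReal_mul hb0.le, hclaim t ht']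
      -- Ioc → indicator over Ioi 0
      rw [← hIocIic t, ← Measure.restrict_restrict measurableSet_Iic]
      rw [← lintegral_indicator measurableSet_Iic]
      refine lintegral_congr fun s => ?_
      rw [hFdef]
      simp only [Set.indicator_apply, mem_Iic]
    -- Tonelli swap
    have hswap : ∫⁻ t in Ioi (0:ℝ), ∫⁻ s in Ioi (0:ℝ), F t s
        = ∫⁻ s in Ioi (0:ℝ), ∫⁻ t in Ioi (0:ℝ), F t s := by
      refine lintegral_lintegral_swap ?_
      have hset : MeasurableSet {p : ℝ × ℝ | p.2 ≤ p.1} :=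
        measurableSet_le measurable_snd measurable_fst
      have hg2 : AEMeasurable (fun p : ℝ × ℝ => g p.2)
          ((volume.restrict (Ioi (0:ℝ))).prod (volume.restrict (Ioi (0:ℝ)))) := by
        exact ((g_aemeas hq hP i).mono_measure hIoiIci).comp_quasiMeasurePreserving
          Measure.quasiMeasurePreserving_snd
      have hcont : Measurable (fun p : ℝ × ℝ =>
          (b * Real.exp (-(lam*p.1))) * Real.exp (q i i * (p.1 - p.2))) := by
        fun_prop
      have hinner : AEMeasurable (fun p : ℝ × ℝ => ENNReal.ofReal
          ((b * Real.exp (-(lam*p.1))) * (Real.exp (q i i * (p.1 - p.2)) * g p.2)))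
          ((volume.restrict (Ioi (0:ℝ))).prod (volume.restrict (Ioi (0:ℝ)))) := by
        refine ENNReal.measurable_ofReal.comp_aemeasurable ?_
        have := hcont.aemeasurable.mul hg2
        refine this.congr (ae_of_all _ fun p => ?_)
        simp only [Pi.mul_apply]; ring
      have heq : Function.uncurry F = Set.indicator {p : ℝ × ℝ | p.2 ≤ p.1}
          (fun p => ENNReal.ofReal
            ((b * Real.exp (-(lam*p.1))) * (Real.exp (q i i * (p.1 - p.2)) * g p.2))) := by
        funext p
        rw [Function.uncurry, hFdef]
        simp only [Set.indicator_apply, mem_setOf_eq]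
      rw [heq]
      exact hinner.indicator hset
    -- inner integral
    have hinner_val : ∀ s : ℝ, 0 < s →
        ∫⁻ t in Ioi (0:ℝ), F t s = ENNReal.ofReal (Real.exp (-(lam*s)) * g s) := by
      intro s hs
      have h1 : (fun t => F t s) = (Ici s).indicator (fun t => ENNReal.ofReal
          ((b * Real.exp (-(lam*t))) * (Real.exp (q i i * (t - s)) * g s))) := by
        funext t
        rw [hFdef]
        simp only [Set.indicator_apply, mem_Ici]
      have hIci : Ici s ∩ Ioi (0:ℝ) = Ici s :=
        inter_eq_left.2 (fun x hx => lt_of_lt_of_le hs hx)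
      rw [h1, lintegral_indicator measurableSet_Ici,
        Measure.restrict_restrict measurableSet_Ici, hIci]
      set C : ℝ := g s * Real.exp (-(q i i)*s) * b with hCdef
      have hC0 : 0 ≤ C := by
        have := g_nonneg hq hP i hs.le
        rw [hCdef]; positivity
      have heqf : ∀ t : ℝ, (b * Real.exp (-(lam*t))) * (Real.exp (q i i * (t - s)) * g s)
          = C * Real.exp (-(b*t)) := by
        intro t
        calc (b * Real.exp (-(lam*t))) * (Real.exp (q i i * (t - s)) * g s)
            = b * g s * (Real.exp (-(lam*t)) * Real.exp (q i i * (t-s))) := by ring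
          _ = b * g s * Real.exp (-(lam*t) + q i i * (t-s)) := by rw [← Real.exp_add]
          _ = b * g s * (Real.exp (-(q i i)*s) * Real.exp (-(b*t))) := by
              rw [← Real.exp_add]; congr 1; rw [hbdef]; ring
          _ = C * Real.exp (-(b*t)) := by rw [hCdef]; ring
      rw [lintegral_congr fun t => by rw [heqf t]]
      have hintb : IntegrableOn (fun t : ℝ => Real.exp (-(b*t))) (Ioi s) volume := by
        have := exp_neg_integrableOn_Ioi s hb0
        refine this.congr_fun (fun t _ => by simp [neg_mul]) measurableSet_Ioi
      have hintC : IntegrableOn (fun t : ℝ => C * Real.exp (-(b*t))) (Ici s) volume := by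
        rw [integrableOn_Ici_iff_integrableOn_Ioi]
        exact hintb.const_mul C
      rw [← ofReal_integral_eq_lintegral_ofReal hintC
        (ae_of_all _ fun t => by positivity)]
      congr 1
      rw [integral_Ici_eq_integral_Ioi, MeasureTheory.integral_const_mul, integral_exp_Ioi s hb0]
      rw [hCdef]
      have hexps : Real.exp (-(q i i)*s) * Real.exp (-(b*s)) = Real.exp (-(lam*s)) := by
        rw [← Real.exp_add]; congr 1; rw [hbdef]; ring
      have hbne : b ≠ 0 := ne_of_gt hb0
      calc g s * Real.exp (-(q i i)*s) * b * (Real.exp (-(b*s))/b)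
          = (Real.exp (-(q i i)*s) * Real.exp (-(b*s))) * g s * (b / b) := by ring
        _ = Real.exp (-(lam*s)) * g s := by rw [hexps, div_self hbne, mul_one]
    -- outer integral
    have houter : ∫⁻ s in Ioi (0:ℝ), ENNReal.ofReal (Real.exp (-(lam*s)) * g s)
        = ∑' k, ENNReal.ofReal (_root_.offDiag q i k) * X k := by
      have hptw : ∀ s : ℝ, 0 < s → ENNReal.ofReal (Real.exp (-(lam*s)) * g s)
          = ∑' k, ENNReal.ofReal (_root_.offDiag q i k)
              * ENNReal.ofReal (Real.exp (-(lam*s)) * dfn P k s) := by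
        intro s hs
        have h1 : Real.exp (-(lam*s)) * g s
            = ∑' k, _root_.offDiag q i k * (Real.exp (-(lam*s)) * dfn P k s) := by
          rw [hgdef]; dsimp only
          rw [← tsum_mul_left]
          exact tsum_congr fun k => by ring
        have hsumm : Summable (fun k => _root_.offDiag q i k * (Real.exp (-(lam*s)) * dfn P k s)) := by
          refine ((g_summable hq hP i hs.le).mul_left (Real.exp (-(lam*s)))).congr fun k => by ring
        have hnn : ∀ k, 0 ≤ _root_.offDiag q i k * (Real.exp (-(lam*s)) * dfn P k s) :=
          fun k => mul_nonneg (offDiag_nonneg hq i k)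
            (mul_nonneg (Real.exp_nonneg _) (d_nonneg hP k hs.le))
        rw [h1, ENNReal.ofReal_tsum_of_nonneg hnn hsumm]
        exact tsum_congr fun k => ENNReal.ofReal_mul (offDiag_nonneg hq i k)
      calc ∫⁻ s in Ioi (0:ℝ), ENNReal.ofReal (Real.exp (-(lam*s)) * g s)
          = ∫⁻ s in Ioi (0:ℝ), ∑' k, ENNReal.ofReal (_root_.offDiag q i k)
              * ENNReal.ofReal (Real.exp (-(lam*s)) * dfn P k s) := by
            refine lintegral_congr_ae ?_
            rw [Filter.EventuallyEq, ae_restrict_iff' measurableSet_Ioi]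
            exact ae_of_all _ fun s hs => hptw s hs
        _ = ∑' k, ∫⁻ s in Ioi (0:ℝ), ENNReal.ofReal (_root_.offDiag q i k)
              * ENNReal.ofReal (Real.exp (-(lam*s)) * dfn P k s) := by
            refine lintegral_tsum fun k => ?_
            exact (hXmeas k).const_mul _
        _ = ∑' k, ENNReal.ofReal (_root_.offDiag q i k) * X k := by
            refine tsum_congr fun k => ?_
            rw [lintegral_const_mul' _ _ ENNReal.ofReal_ne_top]
    calc ENNReal.ofReal (lam - q i i) * X i
        = ∫⁻ t in Ioi (0:ℝ), ∫⁻ s in Ioi (0:ℝ), F t s := hXi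
      _ = ∫⁻ s in Ioi (0:ℝ), ∫⁻ t in Ioi (0:ℝ), F t s := hswap
      _ = ∫⁻ s in Ioi (0:ℝ), ENNReal.ofReal (Real.exp (-(lam*s)) * g s) := by
          refine lintegral_congr_ae ?_
          rw [Filter.EventuallyEq, ae_restrict_iff' measurableSet_Ioi]
          exact ae_of_all _ fun s hs => hinner_val s hs
      _ = ∑' k, ENNReal.ofReal (_root_.offDiag q i k) * X k := houter
  -- pass to the reals
  set x : ℕ → ℝ := fun k => (X k).toReal with hxdef
  have hx0 : ∀ k, 0 ≤ x k := fun k => ENNReal.toReal_nonneg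
  have hx1 : ∀ k, x k ≤ 1 := by
    intro k
    have := ENNReal.toReal_mono ENNReal.ofReal_ne_top (hXle k)
    rwa [ENNReal.toReal_ofReal zero_le_one] at this
  have heqR : ∀ i, (lam - q i i) * x i = ∑' k, _root_.offDiag q i k * x k := by
    intro i
    have hb0 : (0:ℝ) ≤ lam - q i i := by linarith [hq.2.1 i]
    have h1 := congrArg ENNReal.toReal (hkey i)
    rw [ENNReal.toReal_mul, ENNReal.toReal_ofReal hb0] at h1
    rw [ENNReal.tsum_toReal_eq (fun k => ENNReal.mul_ne_top ENNReal.ofReal_ne_top (hXfin k))] at h1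
    rw [tsum_congr (fun k => by
      rw [ENNReal.toReal_mul, ENNReal.toReal_ofReal (offDiag_nonneg hq i k)] :
      ∀ k, (ENNReal.ofReal (_root_.offDiag q i k) * X k).toReal = _root_.offDiag q i k * x k)] at h1
    exact h1
  have hxzero := max_principle q hq hcons ψ hψ1 hψtop c hc hψsum hψLyap lam
    (by rw [hlamdef]; linarith) x hx0 hx1 heqR
  have hX0 : ∀ k, X k = 0 := by
    intro k
    rcases (ENNReal.toReal_eq_zero_iff _).1 (hxzero k) with h | h
    · exact h
    · exact absurd h (hXfin k)
  -- conclude d ≡ 0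
  have hd0 : ∀ i t, 0 ≤ t → dfn P i t = 0 := by
    intro i t ht
    rcases eq_or_lt_of_le ht with h | ht'
    · rw [← h]; exact d_zero hP i
    by_contra hne
    have hdpos : 0 < dfn P i t := lt_of_le_of_ne (d_nonneg hP i ht) (Ne.symm hne)
    have hae := (lintegral_eq_zero_iff' (hXmeas i)).1 (hX0 i)
    rw [Filter.EventuallyEq, ae_restrict_iff' measurableSet_Ioi] at hae
    simp only [Pi.zero_apply] at hae
    rw [ae_iff] at hae
    have hsub : Ici t ⊆ {u : ℝ | ¬ (u ∈ Ioi (0:ℝ)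
        → ENNReal.ofReal (Real.exp (-(lam*u)) * dfn P i u) = 0)} := by
      intro u hu
      have htu : t ≤ u := hu
      simp only [mem_setOf_eq, not_forall]
      refine ⟨lt_of_lt_of_le ht' htu, ?_⟩
      rw [ENNReal.ofReal_eq_zero]
      push_neg
      have hdu : dfn P i t ≤ dfn P i u :=
        d_mono hP i (mem_Ici.2 ht) (mem_Ici.2 (le_trans ht htu)) htu
      have hpos : 0 < dfn P i u := lt_of_lt_of_le hdpos hdu
      exact mul_pos (Real.exp_pos _) hpos
    have hcontr : (volume : Measure ℝ) (Ici t) ≤ volume {u : ℝ | ¬ (u ∈ Ioi (0:ℝ)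
        → ENNReal.ofReal (Real.exp (-(lam*u)) * dfn P i u) = 0)} := measure_mono hsub
    rw [hae, Real.volume_Ici] at hcontr
    simp at hcontr
  intro t ht i
  have := hd0 i t ht
  unfold dfn at this
  linarith

end S15

open S15

/-- if conservative `q1`, `q2` satisfy (1.2) and there is a nonnegative
nondecreasing `φ` with `φ_i → ∞` and `∑_j q2 i j (φ_j − φ_i) ≤ c(1 + φ_i)`,
then both `q1` and `q2` are regular. -/
theorem statement15 (q1 q2 : ℕ → ℕ → ℝ) (hq1 : IsQMatrix q1) (hq2 : IsQMatrix q2)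
    (hc1 : IsConservative q1) (hc2 : IsConservative q2)
    (h12 : Cond12 q1 q2)
    (φ : ℕ → ℝ) (hφ0 : ∀ i, 0 ≤ φ i) (hφmono : Monotone φ)
    (hφtop : Filter.Tendsto φ Filter.atTop Filter.atTop)
    (c : ℝ) (hc : 0 ≤ c)
    (hsum : ∀ i, Summable (fun j => q2 i j * (φ j - φ i)))
    (hLyap : ∀ i, (∑' j, q2 i j * (φ j - φ i)) ≤ c * (1 + φ i)) :
    IsRegularQ q1 ∧ IsRegularQ q2 := by
  classical
  set ψ : ℕ → ℝ := fun k => 1 + φ k with hψdef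
  have hψ1 : ∀ k, 1 ≤ ψ k := fun k => by
    have := hφ0 k; simp only [hψdef]; linarith
  have hψtop : Filter.Tendsto ψ Filter.atTop Filter.atTop :=
    tendsto_atTop_add_const_left _ 1 hφtop
  -- row facts
  have hrow : ∀ (r : ℕ → ℕ → ℝ), IsQMatrix r → IsConservative r →
      ∀ i, Summable (r i) ∧ (∑' k, r i k) = 0 := by
    intro r hr hcr i
    have hs : Summable (fun k => _root_.offDiag r i k) := hr.2.2.1 i
    have heq : ∀ k, r i k = _root_.offDiag r i k + (if k = i then r i i else 0) := by
      intro k; unfold _root_.offDiag; by_cases h : k = i <;> simp [h]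
    have hs2 : Summable (fun k => if k = i then r i i else 0) :=
      summable_of_ne_finset_zero (s := {i}) (fun k hk => by
        simp only [Finset.mem_singleton] at hk; simp [hk])
    constructor
    · exact ((hs.add hs2).congr fun k => (heq k).symm)
    · rw [tsum_congr heq, Summable.tsum_add hs hs2, hcr i, tsum_ite_eq]
      ring
  have hshift : ∀ (r : ℕ → ℕ → ℝ), IsQMatrix r → IsConservative r → ∀ i,
      Summable (fun k => r i k * φ k) → ∀ a : ℝ,
      (∑' k, r i k * (φ k - a)) = ∑' k, r i k * φ k := by
    intro r hr hcr i hsφ a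
    have hsr := (hrow r hr hcr i).1
    calc (∑' k, r i k * (φ k - a)) = ∑' k, (r i k * φ k - a * r i k) :=
          tsum_congr fun k => by ring
      _ = (∑' k, r i k * φ k) - a * ∑' k, r i k := by
          rw [Summable.tsum_sub hsφ (hsr.mul_left a), tsum_mul_left]
      _ = ∑' k, r i k * φ k := by rw [(hrow r hr hcr i).2]; ring
  have hψform : ∀ (r : ℕ → ℕ → ℝ) (i : ℕ), (fun k => r i k * ψ k) = fun k => r i k * (φ k - (-1)) := by
    intro r i; funext k; simp only [hψdef]; ring
  -- q2 facts with φ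
  have h2φsum : ∀ i, Summable (fun k => q2 i k * φ k) := by
    intro i
    have h2 : Summable (q2 i) := (hrow q2 hq2 hc2 i).1
    refine ((hsum i).add (h2.mul_right (φ i))).congr fun k => ?_
    ring
  have h1φ : ∀ i, Summable (fun k => q1 i k * φ k) ∧
      (∑' k, q1 i k * (φ k - φ 0)) ≤ ∑' k, q2 i k * (φ k - φ 0) := by
    intro i
    refine comparison (q1 i) (q2 i) i φ hφ0 hφmono
      (fun k hk => hq1.1 i k (fun h => hk h.symm))
      (fun k hk => hq2.1 i k (fun h => hk h.symm))
      (hrow q1 hq1 hc1 i).1 (hrow q2 hq2 hc2 i).1 (h2φsum i) ?_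
    intro k
    refine h12 i i le_rfl k ?_
    rcases le_or_gt k i with h | h
    · exact Or.inl h
    · exact Or.inr h
  -- ψ-Lyapunov for q2
  have h2ψsum : ∀ i, Summable (fun k => q2 i k * ψ k) := by
    intro i; rw [hψform q2 i]
    exact ((h2φsum i).sub ((hrow q2 hq2 hc2 i).1.mul_left (-1))).congr fun k => by ring
  have h2ψtsum : ∀ i, (∑' k, q2 i k * ψ k) ≤ c * ψ i := by
    intro i
    rw [hψform q2 i, hshift q2 hq2 hc2 i (h2φsum i) (-1),
      ← hshift q2 hq2 hc2 i (h2φsum i) (φ i)]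
    have := hLyap i
    simp only [hψdef]
    linarith
  -- ψ-Lyapunov for q1
  have h1ψsum : ∀ i, Summable (fun k => q1 i k * ψ k) := by
    intro i; rw [hψform q1 i]
    exact (((h1φ i).1).sub ((hrow q1 hq1 hc1 i).1.mul_left (-1))).congr fun k => by ring
  have h1ψtsum : ∀ i, (∑' k, q1 i k * ψ k) ≤ c * ψ i := by
    intro i
    rw [hψform q1 i, hshift q1 hq1 hc1 i (h1φ i).1 (-1),
      ← hshift q1 hq1 hc1 i (h1φ i).1 (φ 0)]
    calc (∑' k, q1 i k * (φ k - φ 0)) ≤ ∑' k, q2 i k * (φ k - φ 0) := (h1φ i).2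
      _ = ∑' k, q2 i k * ψ k := by
          rw [hshift q2 hq2 hc2 i (h2φsum i) (φ 0), hψform q2 i,
            hshift q2 hq2 hc2 i (h2φsum i) (-1)]
      _ ≤ c * ψ i := h2ψtsum i
  -- offDiag conversion
  have off_conv : ∀ (r : ℕ → ℕ → ℝ), IsQMatrix r → IsConservative r →
      (∀ i, Summable (fun k => r i k * ψ k)) → (∀ i, (∑' k, r i k * ψ k) ≤ c * ψ i) →
      (∀ i, Summable fun k => _root_.offDiag r i k * ψ k) ∧
        (∀ i, (∑' k, _root_.offDiag r i k * ψ k) ≤ (c - r i i) * ψ i) := by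
    intro r hr hcr hS hL
    have heq : ∀ i k, _root_.offDiag r i k * ψ k
        = r i k * ψ k - (if k = i then r i i * ψ i else 0) := by
      intro i k; unfold _root_.offDiag; by_cases h : k = i <;> simp [h]
    have hs2 : ∀ i, Summable (fun k => if k = i then r i i * ψ i else 0) := fun i =>
      summable_of_ne_finset_zero (s := {i}) (fun k hk => by
        simp only [Finset.mem_singleton] at hk; simp [hk])
    constructor
    · intro i; exact (((hS i).sub (hs2 i)).congr fun k => (heq i k).symm)
    · intro i
      rw [tsum_congr (heq i), Summable.tsum_sub (hS i) (hs2 i), tsum_ite_eq]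
      have := hL i
      linarith [this]
  obtain ⟨hoff1s, hoff1L⟩ := off_conv q1 hq1 hc1 h1ψsum h1ψtsum
  obtain ⟨hoff2s, hoff2L⟩ := off_conv q2 hq2 hc2 h2ψsum h2ψtsum
  constructor
  · exact ⟨hc1, fun P hPm t ht i =>
      honest hq1 hc1 ψ hψ1 hψtop c hc hoff1s hoff1L hPm.1 hPm.2.1 t ht i⟩
  · exact ⟨hc2, fun P hPm t ht i =>
      honest hq2 hc2 ψ hψ1 hψtop c hc hoff2s hoff2L hPm.1 hPm.2.1 t ht i⟩
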